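/- Define f(a,b,c) = 1/((2−a)(3−a−b−c)). For all reals ℓ₁, ℓ₂, ℓ₃ ∈ [0,1), one has f(ℓ₁,ℓ₂,ℓ₃) + f(ℓ₃,ℓ₁,ℓ₂) + f(ℓ₂,ℓ₃,ℓ₁) ≤ (1/3)·( 1/((2−ℓ₁)(1−ℓ₁)) + 1/((2−ℓ₂)(1−ℓ₂)) + 1/((2−ℓ₃)(1−ℓ₃)) ). -/

import Mathlib

/-- The function f(a,b,c) = 1/((2−a)(3−a−b−c)). -/
noncomputable def fTriple (a b c : ℝ) : ℝ := 1 / ((2 - a) * (3 - a - b - c))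

/-- AM–HM inequality for three positive reals. -/
lemma amhm3 (x y z : ℝ) (hx : 0 < x) (hy : 0 < y) (hz : 0 < z) :
    1/(x+y+z) ≤ (1/9)*(1/x+1/y+1/z) := by
  rw [div_le_iff₀ (by linarith)]
  field_simp
  nlinarith [mul_nonneg (sq_nonneg (x-y)) hz.le, mul_nonneg (sq_nonneg (y-z)) hx.le,
    mul_nonneg (sq_nonneg (x-z)) hy.le, mul_pos (mul_pos hx hy) hz]

/-- Chebyshev-type inequality for the similarly ordered tuples 1/(1+xᵢ) and 1/xᵢ. -/
lemma cheb3 (x y z : ℝ) (hx : 0 < x) (hy : 0 < y) (hz : 0 < z) :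
    (1/(1+x)+1/(1+y)+1/(1+z))*(1/x+1/y+1/z)
      ≤ 3*(1/((1+x)*x)+1/((1+y)*y)+1/((1+z)*z)) := by
  have h1x : (0:ℝ) < 1+x := by linarith
  have h1y : (0:ℝ) < 1+y := by linarith
  have h1z : (0:ℝ) < 1+z := by linarith
  have hD : (0:ℝ) < x*y*z*((1+x)*(1+y)*(1+z)) := by positivity
  rw [div_add_div _ _ (ne_of_gt h1x) (ne_of_gt h1y)]
  field_simp
  nlinarith [mul_nonneg (mul_nonneg (sq_nonneg (x-y)) (mul_pos hz h1z).le) hD.le,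
    mul_nonneg (mul_nonneg (sq_nonneg (y-z)) (mul_pos hx h1x).le) hD.le,
    mul_nonneg (mul_nonneg (sq_nonneg (x-z)) (mul_pos hy h1y).le) hD.le]

/-- For all reals ℓ₁, ℓ₂, ℓ₃ ∈ [0,1),
f(ℓ₁,ℓ₂,ℓ₃) + f(ℓ₃,ℓ₁,ℓ₂) + f(ℓ₂,ℓ₃,ℓ₁)
  ≤ (1/3)·( 1/((2−ℓ₁)(1−ℓ₁)) + 1/((2−ℓ₂)(1−ℓ₂)) + 1/((2−ℓ₃)(1−ℓ₃)) ). -/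
theorem stmt11 (ℓ₁ ℓ₂ ℓ₃ : ℝ) (h₁ : ℓ₁ ∈ Set.Ico (0:ℝ) 1) (h₂ : ℓ₂ ∈ Set.Ico (0:ℝ) 1)
    (h₃ : ℓ₃ ∈ Set.Ico (0:ℝ) 1) :
    fTriple ℓ₁ ℓ₂ ℓ₃ + fTriple ℓ₃ ℓ₁ ℓ₂ + fTriple ℓ₂ ℓ₃ ℓ₁
      ≤ (1 / 3) * (1 / ((2 - ℓ₁) * (1 - ℓ₁)) + 1 / ((2 - ℓ₂) * (1 - ℓ₂))
          + 1 / ((2 - ℓ₃) * (1 - ℓ₃))) := by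
  obtain ⟨h10, h11⟩ := h₁
  obtain ⟨h20, h21⟩ := h₂
  obtain ⟨h30, h31⟩ := h₃
  have hx : 0 < 1 - ℓ₁ := by linarith
  have hy : 0 < 1 - ℓ₂ := by linarith
  have hz : 0 < 1 - ℓ₃ := by linarith
  set x := 1 - ℓ₁ with hxdef
  set y := 1 - ℓ₂ with hydef
  set z := 1 - ℓ₃ with hzdef
  have hA : 0 < 1/(1+x)+1/(1+y)+1/(1+z) := by positivity
  have e1 : fTriple ℓ₁ ℓ₂ ℓ₃ + fTriple ℓ₃ ℓ₁ ℓ₂ + fTriple ℓ₂ ℓ₃ ℓ₁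
      = (1/(1+x)+1/(1+y)+1/(1+z)) * (1/(x+y+z)) := by
    unfold fTriple
    rw [hxdef, hydef, hzdef]
    have e₁ : 2 - ℓ₁ = 1 + (1 - ℓ₁) := by ring
    have e₂ : 2 - ℓ₂ = 1 + (1 - ℓ₂) := by ring
    have e₃ : 2 - ℓ₃ = 1 + (1 - ℓ₃) := by ring
    have eS₁ : 3 - ℓ₁ - ℓ₂ - ℓ₃ = (1 - ℓ₁) + (1 - ℓ₂) + (1 - ℓ₃) := by ring
    have eS₂ : 3 - ℓ₃ - ℓ₁ - ℓ₂ = (1 - ℓ₁) + (1 - ℓ₂) + (1 - ℓ₃) := by ring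
    have eS₃ : 3 - ℓ₂ - ℓ₃ - ℓ₁ = (1 - ℓ₁) + (1 - ℓ₂) + (1 - ℓ₃) := by ring
    rw [e₁, e₂, e₃, eS₁, eS₂, eS₃]
    simp only [one_div, mul_inv]
    ring
  have e2 : (1 / ((2 - ℓ₁) * (1 - ℓ₁)) + 1 / ((2 - ℓ₂) * (1 - ℓ₂))
          + 1 / ((2 - ℓ₃) * (1 - ℓ₃)))
      = (1/((1+x)*x)+1/((1+y)*y)+1/((1+z)*z)) := by
    rw [hxdef, hydef, hzdef]
    ring_nf
  rw [e1, e2]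
  have step1 : (1/(1+x)+1/(1+y)+1/(1+z)) * (1/(x+y+z))
      ≤ (1/(1+x)+1/(1+y)+1/(1+z)) * ((1/9)*(1/x+1/y+1/z)) :=
    mul_le_mul_of_nonneg_left (amhm3 x y z hx hy hz) hA.le
  have step2 := cheb3 x y z hx hy hz
  nlinarith [step1, step2]
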